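/- Let H be a real Hilbert space, let T : H → H be nonexpansive with a fixed point z*, let (λ_j)_{j≥0} ⊆ (0,1], set τ_k := λ_k(1−λ_k), and suppose there is ε > 0 with τ_j ≥ ε for all j. Let (e^j)_{j≥0} ⊆ H be an error sequence with ∑_{i=0}^∞ λ_i ‖e^i‖ < ∞ and ∑_{i=0}^∞ (i+1) λ_i² ‖e^i‖² < ∞, and define the inexact Krasnosel'skiĭ–Mann iterates z^{k+1} = (1−λ_k) z^k + λ_k (T(z^k) + e^k) from z^0 ∈ H. Then (k+1)·‖T z^k − z^k‖² → 0 as k → ∞. -/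

import Mathlib

open Filter Finset

private lemma km_identity {H : Type*} [NormedAddCommGroup H] [InnerProductSpace ℝ H]
    (l : ℝ) (u v : H) :
    ‖(1-l)•u + l•v‖^2 = (1-l)*‖u‖^2 + l*‖v‖^2 - l*(1-l)*‖u-v‖^2 := by
  have h : ∀ w : H, ‖w‖^2 = inner ℝ w w := fun w => (real_inner_self_eq_norm_sq w).symm
  simp only [h, inner_add_add_self, inner_sub_sub_self, real_inner_smul_left,
    real_inner_smul_right]
  ring

private lemma km_contract {H : Type*} [NormedAddCommGroup H] [InnerProductSpace ℝ H]
    (T : H → H) (hT : ∀ x y : H, ‖T x - T y‖ ≤ ‖x - y‖)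
    (l : ℝ) (hl0 : 0 ≤ l) (x y : H) :
    ‖((1-l)•x + l•T x) - ((1-l)•y + l•T y)‖^2
      ≤ ‖x - y‖^2 - l*(1-l)*‖(x - T x) - (y - T y)‖^2 := by
  have hv : ((1-l)•x + l•T x) - ((1-l)•y + l•T y) = (1-l)•(x-y) + l•(T x - T y) := by
    simp [smul_sub]; abel
  have hd : (x - y) - (T x - T y) = (x - T x) - (y - T y) := by abel
  rw [hv, km_identity, hd]
  have h1 : ‖T x - T y‖^2 ≤ ‖x - y‖^2 := by
    have := hT x y; nlinarith [norm_nonneg (T x - T y)]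
  nlinarith

private lemma little_o_lemma (h ξ : ℕ → ℝ) (hh0 : ∀ k, 0 ≤ h k) (hξ0 : ∀ k, 0 ≤ ξ k)
    (hrec : ∀ k, h (k+1) ≤ h k + ξ k) (hhs : Summable h)
    (hξs : Summable (fun k : ℕ => ((k:ℝ)+1) * ξ k)) :
    Filter.Tendsto (fun n : ℕ => ((n:ℝ)+1) * h n) Filter.atTop (nhds 0) := by
  set F : ℕ → ℝ := fun k => ((k:ℝ)+1) * ξ k with hF
  have hF0 : ∀ k, 0 ≤ F k := fun k => mul_nonneg (by positivity) (hξ0 k)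
  set A : ℕ → ℝ := fun m => ∑' j : ℕ, F (j + m) with hA
  set Hh : ℕ → ℝ := fun m => ∑' j : ℕ, h (j + m) with hHh
  have hFsum : ∀ m, Summable (fun j => F (j + m)) := fun m => (summable_nat_add_iff m).2 hξs
  have hhsum : ∀ m, Summable (fun j => h (j + m)) := fun m => (summable_nat_add_iff m).2 hhs
  have hA0 : ∀ m, 0 ≤ A m := fun m => tsum_nonneg (fun j => hF0 _)
  have hHh0 : ∀ m, 0 ≤ Hh m := fun m => tsum_nonneg (fun j => hh0 _)
  have chain : ∀ k n, k ≤ n → h n ≤ h k + ∑ j ∈ Ico k n, ξ j := by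
    intro k n hkn
    induction n, hkn using Nat.le_induction with
    | base => simp
    | succ n hkn ih =>
      calc h (n+1) ≤ h n + ξ n := hrec n
        _ ≤ h k + ∑ j ∈ Ico k n, ξ j + ξ n := by linarith
        _ = h k + ∑ j ∈ Ico k (n+1), ξ j := by
            rw [Finset.sum_Ico_succ_top hkn]; ring
  have step : ∀ m k n, m ≤ k → k ≤ n → h n ≤ h k + A m / ((m:ℝ)+1) := by
    intro m k n hmk hkn
    have hm1 : (0:ℝ) < (m:ℝ)+1 := by positivity
    have h1 : ∑ j ∈ Ico k n, ξ j ≤ A m / ((m:ℝ)+1) := by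
      rw [le_div_iff₀ hm1]
      have h2 : ∑ j ∈ Ico k n, ξ j * ((m:ℝ)+1) ≤ ∑ j ∈ Ico k n, F j := by
        apply Finset.sum_le_sum
        intro j hj
        have hjm : m ≤ j := le_trans hmk (Finset.mem_Ico.1 hj).1
        have hc : ((m:ℝ)+1) ≤ ((j:ℝ)+1) := by
          have : (m:ℝ) ≤ j := by exact_mod_cast hjm
          linarith
        calc ξ j * ((m:ℝ)+1) ≤ ξ j * ((j:ℝ)+1) := mul_le_mul_of_nonneg_left hc (hξ0 j)
          _ = F j := by rw [hF]; ring
      rw [Finset.sum_mul]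
      refine h2.trans ?_
      calc ∑ j ∈ Ico k n, F j ≤ ∑ j ∈ Ico m n, F j :=
            Finset.sum_le_sum_of_subset_of_nonneg (Finset.Ico_subset_Ico hmk le_rfl)
              (fun j _ _ => hF0 j)
        _ = ∑ j ∈ range (n - m), F (m + j) := Finset.sum_Ico_eq_sum_range F m n
        _ ≤ A m := by
            rw [hA]
            have := Summable.sum_le_tsum (range (n-m)) (fun j _ => hF0 (j+m)) (hFsum m)
            simpa [add_comm] using this
    linarith [chain k n hkn]
  have main : ∀ n : ℕ, ((n:ℝ)+1) * h n ≤ 2 * Hh (n/2) + 4 * A (n/2) := by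
    intro n
    set m := n / 2 with hm
    have hmn : m ≤ n := Nat.div_le_self n 2
    have hc0 : ((n - m :ℕ):ℝ) = (n:ℝ) - m := Nat.cast_sub hmn
    have hm1 : (0:ℝ) < (m:ℝ)+1 := by positivity
    have hsum : ((n:ℝ) - m + 1) * h n ≤ Hh m + ((n:ℝ) - m + 1) * (A m / ((m:ℝ)+1)) := by
      have h1 : ∑ k ∈ Icc m n, h n ≤ ∑ k ∈ Icc m n, (h k + A m / ((m:ℝ)+1)) :=
        Finset.sum_le_sum (fun k hk => by
          obtain ⟨hk1, hk2⟩ := Finset.mem_Icc.1 hk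
          exact step m k n hk1 hk2)
      have hcard : (Icc m n).card = n - m + 1 := by rw [Nat.card_Icc]; omega
      rw [Finset.sum_const, hcard, Finset.sum_add_distrib, Finset.sum_const, hcard] at h1
      have h3 : ∑ k ∈ Icc m n, h k ≤ Hh m := by
        rw [hHh]
        have heq : Icc m n = Ico m (n+1) := by ext x; simp [Nat.lt_succ_iff]
        rw [heq, Finset.sum_Ico_eq_sum_range]
        have := Summable.sum_le_tsum (range (n+1-m)) (fun j _ => hh0 (j+m)) (hhsum m)
        simpa [add_comm] using this
      have card : ((n - m + 1:ℕ):ℝ) = (n:ℝ) - m + 1 := by push_cast [hc0]; ring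
      calc ((n:ℝ) - m + 1) * h n = ((n - m + 1 : ℕ):ℝ) * h n := by rw [card]
        _ = (n - m + 1) • h n := (nsmul_eq_mul _ _).symm
        _ ≤ ∑ k ∈ Icc m n, h k + (n - m + 1) • (A m / ((m:ℝ)+1)) := h1
        _ ≤ Hh m + ((n:ℝ) - m + 1) * (A m / ((m:ℝ)+1)) := by
            rw [nsmul_eq_mul, card]; linarith
    have hn1 : n + 1 ≤ 2 * (n - m + 1) := by omega
    have hn2 : n - m + 1 ≤ 2 * (m + 1) := by omega
    have f1 : (n:ℝ) + 1 ≤ 2 * ((n:ℝ) - m + 1) := by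
      have := (Nat.cast_le (α := ℝ)).2 hn1; push_cast [hc0] at this; linarith
    have f2 : (n:ℝ) - m + 1 ≤ 2 * ((m:ℝ) + 1) := by
      have := (Nat.cast_le (α := ℝ)).2 hn2; push_cast [hc0] at this; linarith
    have hdiv : 0 ≤ A m / ((m:ℝ)+1) := div_nonneg (hA0 m) (le_of_lt hm1)
    have e2 : ((n:ℝ) - m + 1) * (A m / ((m:ℝ)+1)) ≤ 2 * A m := by
      have := mul_le_mul_of_nonneg_right f2 hdiv
      rw [mul_assoc, mul_div_cancel₀ _ (ne_of_gt hm1)] at this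
      linarith
    have hhn := hh0 n
    nlinarith [hsum, hHh0 m, hA0 m]
  have hdiv2 : Filter.Tendsto (fun n : ℕ => n / 2) atTop atTop :=
    Filter.tendsto_atTop_atTop.2 (fun b => ⟨2*b, fun n hn => by omega⟩)
  have t1 : Filter.Tendsto (fun n : ℕ => Hh (n/2)) atTop (nhds 0) :=
    (tendsto_sum_nat_add h).comp hdiv2
  have t2 : Filter.Tendsto (fun n : ℕ => A (n/2)) atTop (nhds 0) :=
    (tendsto_sum_nat_add F).comp hdiv2
  have tg : Filter.Tendsto (fun n : ℕ => 2 * Hh (n/2) + 4 * A (n/2)) atTop (nhds 0) := by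
    have := (t1.const_mul 2).add (t2.const_mul 4)
    simpa using this
  exact squeeze_zero (fun n => mul_nonneg (by positivity) (hh0 n)) main tg

set_option maxHeartbeats 1000000 in
/-- Theorem 1, part 5 (inexact KM iteration): for nonexpansive `T` with fixed point `z*`,
`λ_k ∈ (0,1]` with `τ_k = λ_k(1−λ_k) ≥ ε > 0`, errors `(e^j) ⊆ H` with
`∑ λ_i ‖e^i‖ < ∞` and `∑ (i+1) λ_i² ‖e^i‖² < ∞`, the inexact KM iterates
`z^{k+1} = (1−λ_k) z^k + λ_k (T z^k + e^k)` satisfy `(k+1)·‖T z^k − z^k‖² → 0`. -/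
theorem inexact_km_iteration_fpr_rate
    {H : Type*} [NormedAddCommGroup H] [InnerProductSpace ℝ H] [CompleteSpace H]
    (T : H → H) (hT : ∀ x y : H, ‖T x - T y‖ ≤ ‖x - y‖)
    (zstar : H) (hzstar : T zstar = zstar)
    (lam : ℕ → ℝ) (hlam : ∀ k, lam k ∈ Set.Ioc (0 : ℝ) 1)
    (ε : ℝ) (hε : 0 < ε) (htau : ∀ j, ε ≤ lam j * (1 - lam j))
    (e : ℕ → H)
    (he1 : Summable (fun i : ℕ => lam i * ‖e i‖))
    (he2 : Summable (fun i : ℕ => ((i : ℝ) + 1) * lam i ^ 2 * ‖e i‖ ^ 2))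
    (z : ℕ → H) (hz : ∀ k, z (k + 1) = (1 - lam k) • z k + lam k • (T (z k) + e k)) :
    Filter.Tendsto (fun k : ℕ => ((k : ℝ) + 1) * ‖T (z k) - z k‖ ^ 2)
      Filter.atTop (nhds 0) := by
  -- Step A : key recursion  h(k+1) ≤ h k + λ²‖e‖²/ε
  have key : ∀ k, ‖T (z (k+1)) - z (k+1)‖^2
      ≤ ‖T (z k) - z k‖^2 + lam k^2 * ‖e k‖^2 / ε := by
    intro k
    obtain ⟨hl0, hl1⟩ := hlam k
    have htk := htau k
    set l := lam k with hldef
    set G := T (z k) - z k with hG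
    set G' := T (z (k+1)) - z (k+1) with hG'
    have hB : (1-l)•(z k) + l•(T (z k)) = z (k+1) - l • e k := by
      rw [hz k, smul_add]; abel
    have hAv : (1-l)•(z (k+1)) + l•(T (z (k+1))) = z (k+1) + l • G' := by
      rw [hG', smul_sub, sub_smul, one_smul]; abel
    have hxy : z (k+1) - z k = l • (G + e k) := by
      rw [hz k, hG, smul_add, smul_add, smul_sub, sub_smul, one_smul]; abel
    have hmain := km_contract T hT l (le_of_lt hl0) (z (k+1)) (z k)
    rw [hAv, hB] at hmain
    have hv1 : (z (k+1) + l • G') - (z (k+1) - l • e k) = l • (G' + e k) := by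
      rw [smul_add]; abel
    have hv2 : (z (k+1) - T (z (k+1))) - (z k - T (z k)) = G - G' := by
      rw [hG, hG']; abel
    rw [hv1, hv2, hxy] at hmain
    rw [norm_smul, norm_smul, Real.norm_eq_abs, abs_of_pos hl0] at hmain
    have hexp1 : ‖G' + e k‖^2 = ‖G'‖^2 + 2*inner ℝ G' (e k) + ‖e k‖^2 := norm_add_sq_real _ _
    have hexp2 : ‖G + e k‖^2 = ‖G‖^2 + 2*inner ℝ G (e k) + ‖e k‖^2 := norm_add_sq_real _ _
    have eq1 : (l*‖G' + e k‖)^2 = l^2*(‖G'‖^2 + 2*inner ℝ G' (e k) + ‖e k‖^2) := by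
      linear_combination l^2 * hexp1
    have eq2 : (l*‖G + e k‖)^2 = l^2*(‖G‖^2 + 2*inner ℝ G (e k) + ‖e k‖^2) := by
      linear_combination l^2 * hexp2
    rw [eq1, eq2] at hmain
    have hip : inner ℝ G (e k) - inner ℝ G' (e k) ≤ ‖G - G'‖ * ‖e k‖ := by
      have h1 : (inner ℝ (G - G') (e k) : ℝ) = inner ℝ G (e k) - inner ℝ G' (e k) :=
        inner_sub_left _ _ _
      have h2 := real_inner_le_norm (G - G') (e k)
      linarith
    have hτ0 : (0:ℝ) < l*(1-l) := lt_of_lt_of_le hε (htau k)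
    have hA1 : l^2*(‖G'‖^2 - ‖G‖^2) ≤ 2*l^2*(‖G - G'‖*‖e k‖) - (l*(1-l))*‖G - G'‖^2 := by
      have := mul_le_mul_of_nonneg_left hip (by positivity : (0:ℝ) ≤ 2*l^2)
      nlinarith [hmain]
    have h5 : l^2*(‖G'‖^2 - ‖G‖^2)*(l*(1-l)) ≤ l^4*‖e k‖^2 := by
      nlinarith [hA1, sq_nonneg (l*(1-l)*‖G - G'‖ - l^2*‖e k‖), hτ0]
    have hl2 : (0:ℝ) < l^2 := by positivity
    have h6 : (‖G'‖^2 - ‖G‖^2)*(l*(1-l)) ≤ l^2*‖e k‖^2 := by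
      have h61 : l^2*((‖G'‖^2 - ‖G‖^2)*(l*(1-l))) ≤ l^2*(l^2*‖e k‖^2) := by
        calc l^2*((‖G'‖^2 - ‖G‖^2)*(l*(1-l))) = l^2*(‖G'‖^2 - ‖G‖^2)*(l*(1-l)) := by ring
          _ ≤ l^4*‖e k‖^2 := h5
          _ = l^2*(l^2*‖e k‖^2) := by ring
      exact le_of_mul_le_mul_left h61 hl2
    have h7 : ‖G'‖^2 - ‖G‖^2 ≤ l^2*‖e k‖^2/ε := by
      rw [le_div_iff₀ hε]
      rcases le_or_gt (‖G'‖^2) (‖G‖^2) with hc | hc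
      · have h71 : (‖G'‖^2 - ‖G‖^2)*ε ≤ 0 :=
          mul_nonpos_of_nonpos_of_nonneg (by linarith) (le_of_lt hε)
        have : (0:ℝ) ≤ l^2*‖e k‖^2 := by positivity
        linarith
      · have h72 := mul_le_mul_of_nonneg_right (htau k) (le_of_lt (sub_pos.2 hc))
        rw [← hldef] at h72
        linarith [h6, h72]
    linarith
  -- Step B : Fejér monotonicity and summability of the residuals
  have hz' : ∀ k, z (k+1) = ((1 - lam k)•(z k) + lam k•(T (z k))) + lam k • e k := by
    intro k; rw [hz k, smul_add, add_assoc]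
  have hyz : ∀ k, ‖((1 - lam k)•(z k) + lam k•(T (z k))) - zstar‖^2
      ≤ ‖z k - zstar‖^2 - (lam k*(1-lam k))*‖T (z k) - z k‖^2 := by
    intro k
    have h := km_contract T hT (lam k) (le_of_lt (hlam k).1) (z k) zstar
    rw [hzstar] at h
    have hfix : (1 - lam k)•zstar + lam k•zstar = zstar := by
      rw [← add_smul]; simp
    rw [hfix] at h
    have hneg : (z k - T (z k)) - (zstar - zstar) = -(T (z k) - z k) := by abel
    rw [hneg, norm_neg] at h
    exact h
  have hyz1 : ∀ k, ‖((1 - lam k)•(z k) + lam k•(T (z k))) - zstar‖ ≤ ‖z k - zstar‖ := by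
    intro k
    have h := hyz k
    have hτ : (0:ℝ) ≤ lam k*(1-lam k) := le_trans hε.le (htau k)
    have h2 : ‖((1 - lam k)•(z k) + lam k•(T (z k))) - zstar‖^2 ≤ ‖z k - zstar‖^2 := by
      nlinarith [sq_nonneg ‖T (z k) - z k‖, mul_nonneg hτ (sq_nonneg ‖T (z k) - z k‖)]
    nlinarith [norm_nonneg (((1 - lam k)•(z k) + lam k•(T (z k))) - zstar),
      norm_nonneg (z k - zstar)]
  have hsmul : ∀ k, ‖lam k • e k‖ = lam k * ‖e k‖ := by
    intro k; rw [norm_smul, Real.norm_eq_abs, abs_of_pos (hlam k).1]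
  have htri : ∀ k, ‖z (k+1) - zstar‖
      ≤ ‖((1 - lam k)•(z k) + lam k•(T (z k))) - zstar‖ + lam k * ‖e k‖ := by
    intro k
    rw [hz' k]
    have hv : (((1 - lam k)•(z k) + lam k•(T (z k))) + lam k • e k) - zstar
        = (((1 - lam k)•(z k) + lam k•(T (z k))) - zstar) + lam k • e k := by abel
    rw [hv]
    calc ‖(((1 - lam k)•(z k) + lam k•(T (z k))) - zstar) + lam k • e k‖
        ≤ ‖((1 - lam k)•(z k) + lam k•(T (z k))) - zstar‖ + ‖lam k • e k‖ := norm_add_le _ _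
      _ = ‖((1 - lam k)•(z k) + lam k•(T (z k))) - zstar‖ + lam k * ‖e k‖ := by rw [hsmul k]
  have hstep : ∀ k, ‖z (k+1) - zstar‖ ≤ ‖z k - zstar‖ + lam k * ‖e k‖ :=
    fun k => (htri k).trans (by linarith [hyz1 k])
  have ht0 : ∀ k, (0:ℝ) ≤ lam k * ‖e k‖ :=
    fun k => mul_nonneg (hlam k).1.le (norm_nonneg _)
  set S : ℝ := ∑' i : ℕ, lam i * ‖e i‖ with hSdef
  have hS0 : 0 ≤ S := tsum_nonneg ht0
  set M : ℝ := ‖z 0 - zstar‖ + S with hMdef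
  have hM0 : 0 ≤ M := add_nonneg (norm_nonneg _) hS0
  have hbd : ∀ k, ‖z k - zstar‖ ≤ M := by
    have haux : ∀ k, ‖z k - zstar‖ ≤ ‖z 0 - zstar‖ + ∑ i ∈ range k, lam i * ‖e i‖ := by
      intro k
      induction k with
      | zero => simp
      | succ k ih =>
        rw [Finset.sum_range_succ]
        linarith [hstep k]
    intro k
    have := Summable.sum_le_tsum (range k) (fun i _ => ht0 i) he1
    have h2 := haux k
    rw [hMdef, hSdef]
    linarith
  have hfej : ∀ k, ε * ‖T (z k) - z k‖^2
      ≤ (‖z k - zstar‖^2 - ‖z (k+1) - zstar‖^2)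
        + (2*M*(lam k*‖e k‖) + lam k^2*‖e k‖^2) := by
    intro k
    have h1 := hyz k
    have h2 := hyz1 k
    have h3 := htri k
    have h4 : ‖z (k+1) - zstar‖^2
        ≤ (‖((1 - lam k)•(z k) + lam k•(T (z k))) - zstar‖ + lam k*‖e k‖)^2 :=
      pow_le_pow_left₀ (norm_nonneg _) h3 2
    have hMy : ‖((1 - lam k)•(z k) + lam k•(T (z k))) - zstar‖ ≤ M := (h2).trans (hbd k)
    have hy0 : (0:ℝ) ≤ ‖((1 - lam k)•(z k) + lam k•(T (z k))) - zstar‖ := norm_nonneg _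
    have hεr := mul_le_mul_of_nonneg_right (htau k) (sq_nonneg ‖T (z k) - z k‖)
    have hprod := mul_le_mul_of_nonneg_left hMy (ht0 k)
    have h4' : ‖z (k+1) - zstar‖^2
        ≤ ‖((1 - lam k)•(z k) + lam k•(T (z k))) - zstar‖^2
          + 2*((lam k*‖e k‖)*‖((1 - lam k)•(z k) + lam k•(T (z k))) - zstar‖)
          + lam k^2*‖e k‖^2 := by
      calc ‖z (k+1) - zstar‖^2
          ≤ (‖((1 - lam k)•(z k) + lam k•(T (z k))) - zstar‖ + lam k*‖e k‖)^2 := h4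
        _ = ‖((1 - lam k)•(z k) + lam k•(T (z k))) - zstar‖^2
            + 2*((lam k*‖e k‖)*‖((1 - lam k)•(z k) + lam k•(T (z k))) - zstar‖)
            + lam k^2*‖e k‖^2 := by ring
    linarith [h1, h4', hεr, hprod]
  have hQsum : Summable (fun k : ℕ => lam k^2*‖e k‖^2) := by
    apply Summable.of_nonneg_of_le (fun k => by positivity) _ he2
    intro k
    have h1 : (1:ℝ) ≤ (k:ℝ) + 1 := by
      have : (0:ℝ) ≤ (k:ℝ) := Nat.cast_nonneg k
      linarith
    have h2 := mul_le_mul_of_nonneg_right h1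
      (mul_nonneg (sq_nonneg (lam k)) (sq_nonneg ‖e k‖))
    calc lam k^2*‖e k‖^2 = 1*(lam k^2*‖e k‖^2) := by ring
      _ ≤ ((k:ℝ)+1)*(lam k^2*‖e k‖^2) := h2
      _ = ((k:ℝ)+1)*lam k^2*‖e k‖^2 := by ring
  set Q : ℝ := ∑' k : ℕ, lam k^2*‖e k‖^2 with hQdef
  have hsum_eps : Summable (fun k : ℕ => ε * ‖T (z k) - z k‖^2) := by
    apply summable_of_sum_range_le (c := ‖z 0 - zstar‖^2 + (2*M*S + Q))
      (fun n => by positivity)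
    intro n
    have h1 : ∑ k ∈ range n, (ε * ‖T (z k) - z k‖^2)
        ≤ ∑ k ∈ range n, ((‖z k - zstar‖^2 - ‖z (k+1) - zstar‖^2)
          + (2*M*(lam k*‖e k‖) + lam k^2*‖e k‖^2)) :=
      Finset.sum_le_sum (fun k _ => hfej k)
    rw [Finset.sum_add_distrib, Finset.sum_range_sub' (fun k => ‖z k - zstar‖^2)] at h1
    have h2 : ∑ k ∈ range n, (2*M*(lam k*‖e k‖) + lam k^2*‖e k‖^2) ≤ 2*M*S + Q := by
      rw [Finset.sum_add_distrib]
      have ha : ∑ k ∈ range n, 2*M*(lam k*‖e k‖) ≤ 2*M*S := by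
        rw [← Finset.mul_sum, hSdef]
        exact mul_le_mul_of_nonneg_left (Summable.sum_le_tsum _ (fun i _ => ht0 i) he1)
          (by linarith)
      have hb : ∑ k ∈ range n, lam k^2*‖e k‖^2 ≤ Q := by
        rw [hQdef]
        exact Summable.sum_le_tsum _ (fun i _ => by positivity) hQsum
      linarith
    have h3 : (0:ℝ) ≤ ‖z n - zstar‖^2 := sq_nonneg _
    linarith
  have hsum_h : Summable (fun k : ℕ => ‖T (z k) - z k‖^2) := by
    refine (hsum_eps.mul_left ε⁻¹).congr (fun k => ?_)
    field_simp
  have hξs : Summable (fun k : ℕ => ((k:ℝ)+1) * (lam k^2*‖e k‖^2/ε)) := by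
    refine (he2.mul_right ε⁻¹).congr (fun k => ?_)
    rw [div_eq_mul_inv]; ring
  exact little_o_lemma _ _ (fun k => sq_nonneg _)
    (fun k => div_nonneg (by positivity) hε.le)
    (fun k => by have := key k; linarith) hsum_h hξs
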